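/- arXiv:2512.03480 — 2 statements merged into one kernel-verified Lean document; each statement's English description precedes it below -/
import Mathlib

section
/- Let ω be the block partial permutation [[I_{r₁}, 0, 0, 0], [0, 0, I_{r₂}, 0], [0, 0, 0, 0]] as above, Q ∈ X_ω, and N an m×n matrix normal to X_ω at Q (with respect to ⟨A,B⟩ = tr(AᵀB)). Write N = (N₁ | ⋯ | N_n) column-wise. Then N_j lies in the orthogonal complement of the column space C(Q) for every j with r₁ + n₁ + 1 ≤ j ≤ n; consequently, the isometry Φ_Q (left multiplication by the reflection U_Q through C(Q)) sends N to the matrix whose j-th column is U_Q N_j for j ≤ r₁ + n₁ and −N_j for j > r₁ + n₁. -/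
open Matrix

/-- Upper-left `p × q` submatrix. -/
def ulSub {m n : ℕ} (A : Matrix (Fin m) (Fin n) ℝ) (p q : ℕ) (hp : p ≤ m) (hq : q ≤ n) :
    Matrix (Fin p) (Fin q) ℝ :=
  A.submatrix (Fin.castLE hp) (Fin.castLE hq)

/-- The block partial permutation `[[I_{r₁},0,0,0],[0,0,I_{r₂},0],[0,0,0,0]]`. -/
def omegaBlk (r₁ r₂ m₁ n₁ n₂ : ℕ) :
    Matrix (Fin (r₁ + r₂ + m₁)) (Fin (r₁ + n₁ + r₂ + n₂)) ℝ :=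
  Matrix.of fun i j =>
    if (i.val < r₁ ∧ j.val = i.val) ∨
        (r₁ ≤ i.val ∧ i.val < r₁ + r₂ ∧ j.val = i.val + n₁) then 1 else 0

/-- Membership in the regular part `X_ω`. -/
def memX {m n : ℕ} (ω A : Matrix (Fin m) (Fin n) ℝ) : Prop :=
  ∀ (p q : ℕ) (_ : 1 ≤ p) (_ : 1 ≤ q) (hp : p ≤ m) (hq : q ≤ n),
    (ulSub A p q hp hq).rank = (ulSub ω p q hp hq).rank

/-- The column space `C(Q)` of a matrix `Q`. -/
noncomputable def colSpace {m n : ℕ} (Q : Matrix (Fin m) (Fin n) ℝ) :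
    Submodule ℝ (EuclideanSpace ℝ (Fin m)) :=
  Submodule.span ℝ (Set.range fun j : Fin n =>
    (show EuclideanSpace ℝ (Fin m) from WithLp.toLp 2 fun i => Q i j))


open Set Submodule Module Filter

section NormalColsAux


/-- rank as finrank of span of the column family. -/
lemma rank_eq_span {p q : ℕ} (A : Matrix (Fin p) (Fin q) ℝ) :
    A.rank = finrank ℝ (span ℝ (Set.range fun l : Fin q => (fun i => A i l : Fin p → ℝ))) := by
  rw [Matrix.rank_eq_finrank_span_cols]
  rfl

/-- range of an updated family. -/
lemma range_update {α : Type*} {V : Type*} [DecidableEq α] (v : α → V) (j : α) (x : V) :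
    Set.range (Function.update v j x) = insert x (v '' {l | l ≠ j}) := by
  ext y
  constructor
  · rintro ⟨l, rfl⟩
    by_cases hl : l = j
    · subst hl; simp
    · right; exact ⟨l, hl, by simp [Function.update_of_ne hl]⟩
  · rintro (rfl | ⟨l, hl, rfl⟩)
    · exact ⟨j, by simp⟩
    · exact ⟨l, by simp [Function.update_of_ne hl]⟩

/-- Case A: in-submatrix column operation preserves span. -/
lemma span_update_col {q : ℕ} {V : Type*} [AddCommGroup V] [Module ℝ V]
    (v : Fin q → V) (j k : Fin q) (t : ℝ) (h : k ≠ j ∨ 1 + t ≠ 0) :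
    span ℝ (Set.range (Function.update v j (v j + t • v k))) = span ℝ (Set.range v) := by
  apply le_antisymm
  · rw [span_le]
    rintro _ ⟨l, rfl⟩
    rcases eq_or_ne l j with rfl | hl
    · rw [Function.update_self]
      exact add_mem (subset_span ⟨l, rfl⟩) (smul_mem _ _ (subset_span ⟨k, rfl⟩))
    · rw [Function.update_of_ne hl]
      exact subset_span ⟨l, rfl⟩
  · rw [span_le]
    rintro _ ⟨l, rfl⟩
    rcases eq_or_ne l j with rfl | hl
    · rcases eq_or_ne k l with rfl | hk
      · have ht : 1 + t ≠ 0 := h.resolve_left (by simp)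
        have hw : Function.update v k (v k + t • v k) k = (1 + t) • v k := by
          rw [Function.update_self, add_smul, one_smul]
        have hv : v k = (1 + t)⁻¹ • Function.update v k (v k + t • v k) k := by
          rw [hw, smul_smul, inv_mul_cancel₀ ht, one_smul]
        have hmem : (1 + t)⁻¹ • Function.update v k (v k + t • v k) k
            ∈ span ℝ (Set.range (Function.update v k (v k + t • v k))) :=
          smul_mem _ _ (subset_span ⟨k, rfl⟩)
        rwa [← hv] at hmem
      · have hv : v l = Function.update v l (v l + t • v k) l
            - t • Function.update v l (v l + t • v k) k := by
          rw [Function.update_self, Function.update_of_ne hk]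
          abel
        have hmem : Function.update v l (v l + t • v k) l
            - t • Function.update v l (v l + t • v k) k
            ∈ span ℝ (Set.range (Function.update v l (v l + t • v k))) :=
          sub_mem (subset_span ⟨l, rfl⟩) (smul_mem _ _ (subset_span ⟨k, rfl⟩))
        rwa [← hv] at hmem
    · exact subset_span ⟨l, by rw [Function.update_of_ne hl]⟩



/-- Case B: full-row-rank submatrix, perturbing one column keeps span top. -/
lemma span_update_top {p q : ℕ} (v : Fin q → (Fin p → ℝ))
    (hv : span ℝ (Set.range v) = ⊤) (j : Fin q) (u : Fin p → ℝ) :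
    ∃ ε > 0, ∀ t : ℝ, |t| < ε →
      span ℝ (Set.range (Function.update v j (v j + t • u))) = ⊤ := by
  have hins : Set.range v = insert (v j) (v '' {l | l ≠ j}) := by
    rw [← range_update v j (v j), Function.update_eq_self]
  have hu : u ∈ span ℝ ({v j} : Set (Fin p → ℝ)) ⊔ span ℝ (v '' {l | l ≠ j}) := by
    rw [← span_insert, ← hins, hv]; exact mem_top
  obtain ⟨z, hz, y, hy, rfl⟩ := Submodule.mem_sup.mp hu
  obtain ⟨a, rfl⟩ := Submodule.mem_span_singleton.mp hz
  refine ⟨(|a| + 1)⁻¹, by positivity, fun t ht => ?_⟩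
  have hta : 1 + t * a ≠ 0 := by
    have h1 : |t| * (|a| + 1) < 1 := by
      have := mul_lt_mul_of_pos_right ht (by positivity : (0:ℝ) < |a| + 1)
      rwa [inv_mul_cancel₀ (by positivity : |a| + 1 ≠ 0)] at this
    have h2 : |t * a| < 1 := by
      rw [abs_mul]
      calc |t| * |a| ≤ |t| * (|a| + 1) :=
            mul_le_mul_of_nonneg_left (by linarith) (abs_nonneg t)
        _ < 1 := h1
    intro h0
    rw [show t * a = -1 by linarith, abs_neg, abs_one] at h2
    linarith
  set w := Function.update v j (v j + t • (a • v j + y)) with hwdef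
  have hwl : ∀ l' ≠ j, w l' = v l' := fun l' h => Function.update_of_ne h _ _
  rw [eq_top_iff, ← hv, span_le]
  rintro _ ⟨l, rfl⟩
  have hy' : y ∈ span ℝ (Set.range w) := by
    refine (span_le.mpr fun x hx => subset_span ?_) hy
    obtain ⟨l', hl', rfl⟩ := hx
    exact ⟨l', hwl l' hl'⟩
  rcases eq_or_ne l j with rfl | hl
  · have key : (1 + t * a) • v l = w l - t • y := by
      rw [hwdef, Function.update_self]
      rw [add_smul, one_smul, smul_add, smul_smul]
      abel
    have hmem : (1 + t * a) • v l ∈ span ℝ (Set.range w) :=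
      key ▸ sub_mem (subset_span ⟨l, rfl⟩) (smul_mem _ _ hy')
    have := smul_mem _ (1 + t * a)⁻¹ hmem
    rwa [smul_smul, inv_mul_cancel₀ hta, one_smul] at this
  · exact subset_span ⟨l, hwl l hl⟩

/-- Case C: pivotal column, perturbing it keeps the rank, for all but at most one `t`. -/
lemma span_update_pivot {q : ℕ} {V : Type*} [AddCommGroup V] [Module ℝ V]
    [FiniteDimensional ℝ V]
    (v : Fin q → V) (j : Fin q) (u : V) (f : ℕ)
    (hf : finrank ℝ (span ℝ (Set.range v)) = f)
    (hW : finrank ℝ (span ℝ (v '' {l | l ≠ j})) + 1 ≤ f) :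
    ∃ ε > 0, ∀ t : ℝ, 0 < t → t < ε →
      finrank ℝ (span ℝ (Set.range (Function.update v j (v j + t • u)))) = f := by
  set W := span ℝ (v '' {l | l ≠ j}) with hWdef
  have hins : Set.range v = insert (v j) (v '' {l | l ≠ j}) := by
    rw [← range_update v j (v j), Function.update_eq_self]
  have hsup : span ℝ (Set.range v) = span ℝ ({v j} : Set V) ⊔ W := by
    rw [hins, span_insert]
  have hsing : ∀ x : V, finrank ℝ (span ℝ ({x} : Set V)) ≤ 1 := by
    intro x
    classical
    simpa using finrank_span_le_card ({x} : Set V)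
  have hge : f ≤ finrank ℝ W + 1 := by
    rw [← hf, hsup]
    have h2 := Submodule.finrank_add_le_finrank_add_finrank (span ℝ ({v j} : Set V)) W
    have h1 := hsing (v j)
    omega
  have hvj : v j ∉ W := by
    intro hem
    have hle : span ℝ (Set.range v) ≤ W := by
      rw [hsup]
      exact sup_le (span_le.mpr (by simpa using hem)) le_rfl
    have := Submodule.finrank_mono hle
    omega
  have huniq : ∀ t₁ t₂ : ℝ, v j + t₁ • u ∈ W → v j + t₂ • u ∈ W → t₁ = t₂ := by
    intro t₁ t₂ h₁ h₂
    by_contra hne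
    have h3 := sub_mem h₁ h₂
    rw [show (v j + t₁ • u) - (v j + t₂ • u) = (t₁ - t₂) • u by
      rw [sub_smul]; abel] at h3
    have hu' : u ∈ W := by
      have := smul_mem _ (t₁ - t₂)⁻¹ h3
      rwa [smul_smul, inv_mul_cancel₀ (sub_ne_zero.mpr hne), one_smul] at this
    refine hvj ?_
    have := sub_mem h₁ (smul_mem _ t₁ hu')
    simpa using this
  have hgood : ∀ t : ℝ, v j + t • u ∉ W →
      finrank ℝ (span ℝ (Set.range (Function.update v j (v j + t • u)))) = f := by
    intro t hnb
    rw [range_update, span_insert, ← hWdef]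
    set x := v j + t • u with hx
    have hxsup : x ∈ span ℝ ({x} : Set V) ⊔ W := mem_sup_left (mem_span_singleton_self x)
    have hlt : finrank ℝ W < finrank ℝ ↥(span ℝ ({x} : Set V) ⊔ W) := by
      refine Submodule.finrank_lt_finrank_of_lt (lt_of_le_of_ne le_sup_right fun he => ?_)
      exact hnb (by rw [he]; exact hxsup)
    have hle : finrank ℝ ↥(span ℝ ({x} : Set V) ⊔ W) ≤ finrank ℝ (span ℝ ({x} : Set V))
        + finrank ℝ W := Submodule.finrank_add_le_finrank_add_finrank _ _
    have h1 := hsing x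
    omega
  by_cases hbad : ∃ t : ℝ, 0 < t ∧ v j + t • u ∈ W
  · obtain ⟨t₀, ht₀, hb⟩ := hbad
    exact ⟨t₀, ht₀, fun t ht htl =>
      hgood t fun hc => absurd (huniq t t₀ hc hb) (by linarith)⟩
  · exact ⟨1, one_pos, fun t ht _ => hgood t fun hc => hbad ⟨t, ht, hc⟩⟩


lemma mem_tangentCone {E : Type*} [AddCommGroup E] [Module ℝ E] [TopologicalSpace E] [ContinuousSMul ℝ E]
    {s : Set E} {x y : E}
    (h : ∀ᶠ t in nhdsWithin (0:ℝ) (Set.Ioi 0), x + t • y ∈ s) : y ∈ tangentConeAt ℝ s x := by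
  have htend : Tendsto (fun n : ℕ => ((n : ℝ) + 1)⁻¹) atTop (nhdsWithin (0:ℝ) (Set.Ioi 0)) := by
    apply tendsto_nhdsWithin_of_tendsto_nhds_of_eventually_within
    · simpa [one_div] using tendsto_one_div_add_atTop_nhds_zero_nat (𝕜 := ℝ)
    · exact Eventually.of_forall fun n => Set.mem_Ioi.mpr (by positivity)
  refine mem_tangentConeAt_of_seq atTop (fun n : ℕ => (n : ℝ) + 1)
    (fun n => ((n : ℝ) + 1)⁻¹ • y) ?_ (htend.eventually h) ?_
  · have := ((tendsto_nhdsWithin_iff.mp htend).1).smul_const y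
    simpa using this
  · have heq : (fun n : ℕ => ((n : ℝ) + 1) • (((n : ℝ) + 1)⁻¹ • y)) = fun _ => y :=
      funext fun n => by rw [smul_smul, mul_inv_cancel₀ (by positivity), one_smul]
    rw [heq]
    exact tendsto_const_nhds

lemma rank_ulSub_omega (r₁ r₂ m₁ n₁ n₂ p q : ℕ) (hp : p ≤ r₁ + r₂ + m₁)
    (hq : q ≤ r₁ + n₁ + r₂ + n₂) (hq1 : r₁ + n₁ ≤ q) :
    (ulSub (omegaBlk r₁ r₂ m₁ n₁ n₂) p q hp hq).rank = min p (min (q - n₁) (r₁ + r₂)) := by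
  classical
  set s := min p (min (q - n₁) (r₁ + r₂)) with hs
  have hsp : s ≤ p := min_le_left _ _
  set v : Fin q → (Fin p → ℝ) :=
    fun l i => ulSub (omegaBlk r₁ r₂ m₁ n₁ n₂) p q hp hq i l with hv
  set g : Fin s → (Fin p → ℝ) := fun i => Pi.single (Fin.castLE hsp i) 1 with hg
  have hent : ∀ (l : Fin q) (i : Fin p), v l i =
      if (i.val < r₁ ∧ l.val = i.val) ∨
        (r₁ ≤ i.val ∧ i.val < r₁ + r₂ ∧ l.val = i.val + n₁) then 1 else 0 :=
    fun l i => rfl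
  have hc1 : ∀ l : Fin q, v l = 0 ∨ ∃ i : Fin s, v l = g i := by
    intro l
    have hl := l.isLt
    by_cases hl1 : l.val < r₁
    · by_cases hlp : l.val < p
      · right
        have hib : l.val < s := by omega
        refine ⟨⟨l.val, hib⟩, ?_⟩
        have hcast : (Fin.castLE hsp (⟨l.val, hib⟩ : Fin s)).val = l.val := rfl
        funext i'
        have hi' := i'.isLt
        rw [hent, hg]
        simp only [Pi.single_apply, Fin.ext_iff, hcast]
        split_ifs <;> first | rfl | (exfalso; omega)
      · left
        funext i'
        have hi' := i'.isLt
        rw [hent]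
        simp only [Pi.zero_apply]
        rw [if_neg (by omega)]
    · by_cases hl2 : l.val < r₁ + n₁
      · left
        funext i'
        have hi' := i'.isLt
        rw [hent]
        simp only [Pi.zero_apply]
        rw [if_neg (by omega)]
      · by_cases hl3 : l.val - n₁ < p ∧ l.val - n₁ < r₁ + r₂
        · right
          have hib : l.val - n₁ < s := by omega
          refine ⟨⟨l.val - n₁, hib⟩, ?_⟩
          have hcast : (Fin.castLE hsp (⟨l.val - n₁, hib⟩ : Fin s)).val = l.val - n₁ := rfl
          funext i'
          have hi' := i'.isLt
          rw [hent, hg]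
          simp only [Pi.single_apply, Fin.ext_iff, hcast]
          split_ifs <;> first | rfl | (exfalso; omega)
        · left
          funext i'
          have hi' := i'.isLt
          rw [hent]
          simp only [Pi.zero_apply]
          rw [if_neg (by omega)]
  have hc2 : ∀ i : Fin s, ∃ l : Fin q, v l = g i := by
    intro i
    have his := i.isLt
    by_cases hir : i.val < r₁
    · have hlb : i.val < q := by omega
      refine ⟨⟨i.val, hlb⟩, ?_⟩
      have hlval : ((⟨i.val, hlb⟩ : Fin q)).val = i.val := rfl
      have hcast : (Fin.castLE hsp i).val = i.val := rfl
      funext i'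
      have hi' := i'.isLt
      rw [hent, hg]
      simp only [Pi.single_apply, Fin.ext_iff, hcast, hlval]
      split_ifs <;> first | rfl | (exfalso; omega)
    · have hlb : i.val + n₁ < q := by omega
      refine ⟨⟨i.val + n₁, hlb⟩, ?_⟩
      have hlval : ((⟨i.val + n₁, hlb⟩ : Fin q)).val = i.val + n₁ := rfl
      have hcast : (Fin.castLE hsp i).val = i.val := rfl
      funext i'
      have hi' := i'.isLt
      rw [hent, hg]
      simp only [Pi.single_apply, Fin.ext_iff, hcast, hlval]
      split_ifs <;> first | rfl | (exfalso; omega)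
  have hspan : span ℝ (Set.range v) = span ℝ (Set.range g) := by
    apply le_antisymm <;> rw [span_le]
    · rintro _ ⟨l, rfl⟩
      rcases hc1 l with h0 | ⟨i, hi⟩
      · rw [h0]; exact zero_mem _
      · rw [hi]; exact subset_span ⟨i, rfl⟩
    · rintro _ ⟨i, rfl⟩
      obtain ⟨l, hl⟩ := hc2 i
      exact hl ▸ subset_span ⟨l, rfl⟩
  have hgb : g = (Pi.basisFun ℝ (Fin p)) ∘ (Fin.castLE hsp) :=
    funext fun i => by simp [hg]
  have hli : LinearIndependent ℝ g := by
    rw [hgb]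
    exact (Pi.basisFun ℝ (Fin p)).linearIndependent.comp
      (Fin.castLE hsp) (Fin.castLE_injective hsp)
  rw [rank_eq_span]
  rw [show (fun l : Fin q => (fun i => ulSub (omegaBlk r₁ r₂ m₁ n₁ n₂) p q hp hq i l
    : Fin p → ℝ)) = v from rfl]
  rw [hspan, finrank_span_eq_card hli, Fintype.card_fin]


lemma rank_pert (r₁ r₂ m₁ n₁ n₂ : ℕ)
    (Q : Matrix (Fin (r₁ + r₂ + m₁)) (Fin (r₁ + n₁ + r₂ + n₂)) ℝ)
    (hQ : memX (omegaBlk r₁ r₂ m₁ n₁ n₂) Q)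
    (j k : Fin (r₁ + n₁ + r₂ + n₂)) (hj : r₁ + n₁ ≤ j.val)
    (hk : k.val ≤ j.val ∨ k.val < r₁ + n₁ + r₂)
    (p q : ℕ) (h1p : 1 ≤ p) (h1q : 1 ≤ q)
    (hp : p ≤ r₁ + r₂ + m₁) (hq : q ≤ r₁ + n₁ + r₂ + n₂) :
    ∀ᶠ t in nhdsWithin (0:ℝ) (Set.Ioi 0),
      (ulSub (Q + t • Matrix.of fun i l => if l = j then Q i k else 0) p q hp hq).rank
        = (ulSub (omegaBlk r₁ r₂ m₁ n₁ n₂) p q hp hq).rank := by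
  classical
  by_cases hqj : q ≤ j.val
  · -- untouched submatrix
    refine Eventually.of_forall fun t => ?_
    have heq : ulSub (Q + t • Matrix.of fun i l => if l = j then Q i k else 0) p q hp hq
        = ulSub Q p q hp hq := by
      ext i l
      show Q _ _ + t * (if Fin.castLE hq l = j then Q _ k else 0) = Q _ _
      rw [if_neg (by
        intro hcon
        have : (Fin.castLE hq l).val = j.val := by rw [hcon]
        have hlq := l.isLt
        simp only [Fin.coe_castLE] at this
        omega)]
      ring
    rw [heq]
    exact hQ p q h1p h1q hp hq
  · -- j < q
    push_neg at hqj
    set v : Fin q → (Fin p → ℝ) := fun l i => ulSub Q p q hp hq i l with hv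
    set jq : Fin q := ⟨j.val, hqj⟩ with hjq
    set u : Fin p → ℝ := fun i => Q (Fin.castLE hp i) k with hu
    have hvrank : finrank ℝ (span ℝ (Set.range v)) = (ulSub Q p q hp hq).rank := by
      rw [hv]
      exact (rank_eq_span _).symm
    have hcols : ∀ t : ℝ,
        (fun l : Fin q => (fun i => ulSub
            (Q + t • Matrix.of fun i l => if l = j then Q i k else 0) p q hp hq i l
          : Fin p → ℝ))
        = Function.update v jq (v jq + t • u) := by
      intro t
      funext l
      by_cases hl : l = jq
      · subst hl
        rw [Function.update_self]
        funext i
        show Q _ _ + t * (if Fin.castLE hq jq = j then Q _ k else 0)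
          = Q _ _ + t * Q _ k
        rw [if_pos (show Fin.castLE hq jq = j from Fin.ext rfl)]
      · rw [Function.update_of_ne hl]
        funext i
        show Q _ _ + t * (if Fin.castLE hq l = j then Q _ k else 0) = Q _ _
        rw [if_neg (by
          intro hcon
          apply hl
          apply Fin.ext
          have : (Fin.castLE hq l).val = j.val := by rw [hcon]
          simpa using this)]
        ring
    have hrw : ∀ t : ℝ,
        (ulSub (Q + t • Matrix.of fun i l => if l = j then Q i k else 0) p q hp hq).rank
        = finrank ℝ (span ℝ (Set.range (Function.update v jq (v jq + t • u)))) := by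
      intro t
      rw [rank_eq_span, hcols t]
    by_cases hkq : k.val < q
    · -- column operation inside the submatrix
      set kq : Fin q := ⟨k.val, hkq⟩ with hkq'
      have huv : u = v kq := by
        funext i
        show Q _ k = Q _ (Fin.castLE hq kq)
        congr 1
      refine eventually_mem_nhdsWithin.mono fun t ht => ?_
      have ht' : (0:ℝ) < t := ht
      rw [hrw t, huv, span_update_col v jq kq t (Or.inr (by linarith)), hvrank]
      exact hQ p q h1p h1q hp hq
    · -- k outside: j < q ≤ k, hence k.val < r₁+n₁+r₂
      have hkd : k.val < r₁ + n₁ + r₂ := by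
        rcases hk with h | h
        · omega
        · exact h
      have hqk : q ≤ k.val := by omega
      have hrkQ : (ulSub Q p q hp hq).rank = min p (min (q - n₁) (r₁ + r₂)) := by
        rw [hQ p q h1p h1q hp hq, rank_ulSub_omega r₁ r₂ m₁ n₁ n₂ p q hp hq (by omega)]
      have hfr : finrank ℝ (span ℝ (Set.range v)) = min p (min (q - n₁) (r₁ + r₂)) := by
        rw [hvrank, hrkQ]
      by_cases hpq : q ≤ p + n₁
      · -- pivotal case
        set f : ℕ := q - n₁ with hf
        have hfeq : min p (min (q - n₁) (r₁ + r₂)) = f := by omega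
        -- prefix dimension
        have hprefix : finrank ℝ (span ℝ (v '' {l | l.val < j.val})) = j.val - n₁ := by
          by_cases hj0 : j.val = 0
          · have hem : {l : Fin q | l.val < j.val} = ∅ := by
              ext l
              simp only [Set.mem_setOf_eq, Set.mem_empty_iff_false, iff_false]
              omega
            rw [hem, Set.image_empty, span_empty, finrank_bot]
            omega
          · have hjq' : j.val ≤ r₁ + n₁ + r₂ + n₂ := by omega
            set vj : Fin j.val → Fin p → ℝ := fun l i => ulSub Q p j.val hp hjq' i l with hvj
            have himg : v '' {l | l.val < j.val} = Set.range vj := by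
              ext x
              constructor
              · rintro ⟨l, hl, rfl⟩
                refine ⟨⟨l.val, hl⟩, ?_⟩
                funext i
                show Q (Fin.castLE hp i) (Fin.castLE hjq' ⟨l.val, hl⟩)
                  = Q (Fin.castLE hp i) (Fin.castLE hq l)
                congr 1
              · rintro ⟨l', rfl⟩
                refine ⟨⟨l'.val, by omega⟩, l'.isLt, ?_⟩
                funext i
                show Q (Fin.castLE hp i) (Fin.castLE hq ⟨l'.val, _⟩)
                  = Q (Fin.castLE hp i) (Fin.castLE hjq' l')
                congr 1
            rw [himg, hvj, ← rank_eq_span,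
              hQ p j.val h1p (by omega) hp hjq',
              rank_ulSub_omega r₁ r₂ m₁ n₁ n₂ p j.val hp hjq' (by omega)]
            omega
        have hsuffix : finrank ℝ (span ℝ (v '' {l | j.val < l.val})) ≤ q - (j.val + 1) := by
          set c := q - (j.val + 1) with hc
          set vs : Fin c → Fin p → ℝ := fun l' => v ⟨j.val + 1 + l'.val, by omega⟩ with hvs
          have himg : v '' {l | j.val < l.val} = Set.range vs := by
            ext x
            constructor
            · rintro ⟨l, hl, rfl⟩
              have hl' : j.val < l.val := hl
              have hlq := l.isLt
              refine ⟨⟨l.val - (j.val + 1), by omega⟩, ?_⟩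
              exact congrArg v (Fin.ext (show j.val + 1 + (l.val - (j.val + 1)) = l.val
                by omega))
            · rintro ⟨l', rfl⟩
              refine ⟨⟨j.val + 1 + l'.val, by omega⟩, ?_, rfl⟩
              show j.val < j.val + 1 + l'.val
              omega
          rw [himg]
          have h1 : finrank ℝ (span ℝ (Set.range vs)) ≤ (Set.range vs).toFinset.card :=
            finrank_span_le_card _
          have h2 : (Set.range vs).toFinset.card ≤ c := by
            rw [Set.toFinset_range]
            exact Finset.card_image_le.trans (by simp)
          omega
        have hWb : finrank ℝ (span ℝ (v '' {l | l ≠ jq})) + 1 ≤ f := by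
          have hset : {l : Fin q | l ≠ jq} = {l | l.val < j.val} ∪ {l | j.val < l.val} := by
            ext l
            simp only [Set.mem_setOf_eq, Set.mem_union, Ne, Fin.ext_iff]
            show ¬ l.val = j.val ↔ _
            omega
          rw [hset, Set.image_union, span_union]
          have h1 := Submodule.finrank_add_le_finrank_add_finrank
            (span ℝ (v '' {l | l.val < j.val})) (span ℝ (v '' {l | j.val < l.val}))
          omega
        obtain ⟨ε, hε, hgood⟩ := span_update_pivot v jq u f (by rw [hfr]; exact hfeq) hWb
        have hev : Set.Ioo (0:ℝ) ε ∈ nhdsWithin (0:ℝ) (Set.Ioi 0) :=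
          Ioo_mem_nhdsGT_of_mem (Set.mem_Ico.mpr ⟨le_rfl, hε⟩)
        refine Filter.eventually_iff_exists_mem.mpr ⟨_, hev, fun t ht => ?_⟩
        rw [hrw t, hgood t ht.1 ht.2,
          rank_ulSub_omega r₁ r₂ m₁ n₁ n₂ p q hp hq (by omega)]
        omega
      · -- full row rank case
        have hrkp : (ulSub Q p q hp hq).rank = p := by rw [hrkQ]; omega
        have htop : span ℝ (Set.range v) = ⊤ := by
          apply Submodule.eq_top_of_finrank_eq
          rw [hfr]
          rw [Module.finrank_fin_fun]
          omega
        obtain ⟨ε, hε, hgood⟩ := span_update_top v htop jq u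
        have hev : Set.Ioo (0:ℝ) ε ∈ nhdsWithin (0:ℝ) (Set.Ioi 0) :=
          Ioo_mem_nhdsGT_of_mem (Set.mem_Ico.mpr ⟨le_rfl, hε⟩)
        refine Filter.eventually_iff_exists_mem.mpr ⟨_, hev, fun t ht => ?_⟩
        rw [hrw t, hgood t (by rw [abs_of_pos ht.1]; exact ht.2)]
        rw [finrank_top, Module.finrank_fin_fun,
          rank_ulSub_omega r₁ r₂ m₁ n₁ n₂ p q hp hq (by omega)]
        omega


lemma tangent_vec (r₁ r₂ m₁ n₁ n₂ : ℕ)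
    (Q : Matrix (Fin (r₁ + r₂ + m₁)) (Fin (r₁ + n₁ + r₂ + n₂)) ℝ)
    (hQ : memX (omegaBlk r₁ r₂ m₁ n₁ n₂) Q)
    (j k : Fin (r₁ + n₁ + r₂ + n₂)) (hj : r₁ + n₁ ≤ j.val)
    (hk : k.val ≤ j.val ∨ k.val < r₁ + n₁ + r₂) :
    (Matrix.of fun i l => if l = j then Q i k else 0)
      ∈ tangentConeAt ℝ {B | memX (omegaBlk r₁ r₂ m₁ n₁ n₂) B} Q := by
  have hall : ∀ p q : ℕ, ∀ᶠ t in nhdsWithin (0:ℝ) (Set.Ioi 0),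
      ∀ (h1p : 1 ≤ p) (h1q : 1 ≤ q) (hp : p ≤ r₁ + r₂ + m₁) (hq : q ≤ r₁ + n₁ + r₂ + n₂),
      (ulSub (Q + t • Matrix.of fun i l => if l = j then Q i k else 0) p q hp hq).rank
        = (ulSub (omegaBlk r₁ r₂ m₁ n₁ n₂) p q hp hq).rank := by
    intro p q
    by_cases hcase : 1 ≤ p ∧ 1 ≤ q ∧ p ≤ r₁ + r₂ + m₁ ∧ q ≤ r₁ + n₁ + r₂ + n₂
    · obtain ⟨a, b, c, d⟩ := hcase
      refine (rank_pert r₁ r₂ m₁ n₁ n₂ Q hQ j k hj hk p q a b c d).mono fun t ht => ?_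
      intro h1p h1q hp hq
      exact ht
    · refine Eventually.of_forall fun t => ?_
      intro h1p h1q hp hq
      exact absurd ⟨h1p, h1q, hp, hq⟩ hcase
  have hfin : ∀ᶠ t in nhdsWithin (0:ℝ) (Set.Ioi 0),
      ∀ p ∈ Finset.range (r₁ + r₂ + m₁ + 1), ∀ q ∈ Finset.range (r₁ + n₁ + r₂ + n₂ + 1),
      ∀ (h1p : 1 ≤ p) (h1q : 1 ≤ q) (hp : p ≤ r₁ + r₂ + m₁) (hq : q ≤ r₁ + n₁ + r₂ + n₂),
      (ulSub (Q + t • Matrix.of fun i l => if l = j then Q i k else 0) p q hp hq).rank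
        = (ulSub (omegaBlk r₁ r₂ m₁ n₁ n₂) p q hp hq).rank := by
    rw [Filter.eventually_all_finset]
    intro p _
    rw [Filter.eventually_all_finset]
    intro q _
    exact hall p q
  have hmem : ∀ᶠ t in nhdsWithin (0:ℝ) (Set.Ioi 0),
      Q + t • (Matrix.of fun i l => if l = j then Q i k else 0)
        ∈ {B | memX (omegaBlk r₁ r₂ m₁ n₁ n₂) B} := by
    refine hfin.mono fun t ht => ?_
    intro p q h1p h1q hp hq
    exact ht p (Finset.mem_range.mpr (by omega)) q (Finset.mem_range.mpr (by omega))
      h1p h1q hp hq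
  exact mem_tangentCone hmem

lemma dot_zero (r₁ r₂ m₁ n₁ n₂ : ℕ)
    (Q N : Matrix (Fin (r₁ + r₂ + m₁)) (Fin (r₁ + n₁ + r₂ + n₂)) ℝ)
    (hQ : memX (omegaBlk r₁ r₂ m₁ n₁ n₂) Q)
    (hN : ∀ T ∈ tangentConeAt ℝ {B | memX (omegaBlk r₁ r₂ m₁ n₁ n₂) B} Q,
      Matrix.trace (Nᵀ * T) = 0)
    (j k : Fin (r₁ + n₁ + r₂ + n₂)) (hj : r₁ + n₁ ≤ j.val)
    (hk : k.val ≤ j.val ∨ k.val < r₁ + n₁ + r₂) :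
    ∑ i, Q i k * N i j = 0 := by
  have h0 := hN _ (tangent_vec r₁ r₂ m₁ n₁ n₂ Q hQ j k hj hk)
  have h1 : Matrix.trace (Nᵀ * Matrix.of fun i l => if l = j then Q i k else 0)
      = ∑ i, Q i k * N i j := by
    rw [Matrix.trace]
    simp only [Matrix.diag_apply, Matrix.mul_apply, Matrix.transpose_apply, Matrix.of_apply]
    rw [Finset.sum_eq_single j]
    · simp [mul_comm]
    · intro b _ hb
      simp [hb]
    · intro h
      exact absurd (Finset.mem_univ j) h
  rw [h1] at h0
  exact h0

lemma col_closure (r₁ r₂ m₁ n₁ n₂ : ℕ)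
    (Q : Matrix (Fin (r₁ + r₂ + m₁)) (Fin (r₁ + n₁ + r₂ + n₂)) ℝ)
    (hQ : memX (omegaBlk r₁ r₂ m₁ n₁ n₂) Q)
    (hn1 : 1 ≤ r₁ + n₁ + r₂ + n₂) (k : Fin (r₁ + n₁ + r₂ + n₂)) :
    (fun i => Q i k : Fin (r₁ + r₂ + m₁) → ℝ)
      ∈ span ℝ ((fun l : Fin (r₁ + n₁ + r₂ + n₂) => (fun i => Q i l : Fin (r₁ + r₂ + m₁) → ℝ))
          '' {k' | k'.val < r₁ + n₁ + r₂}) := by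
  classical
  set colf : Fin (r₁ + n₁ + r₂ + n₂) → (Fin (r₁ + r₂ + m₁) → ℝ) :=
    fun l i => Q i l with hcolf
  by_cases hm0 : r₁ + r₂ + m₁ = 0
  · have hz : colf k = 0 := funext fun i => absurd i.isLt (by omega)
    show colf k ∈ _
    rw [hz]
    exact zero_mem _
  · have h1m : 1 ≤ r₁ + r₂ + m₁ := by omega
    have hQeq : ulSub Q (r₁ + r₂ + m₁) (r₁ + n₁ + r₂ + n₂) le_rfl le_rfl = Q := by
      ext i l
      show Q (Fin.castLE _ i) (Fin.castLE _ l) = Q i l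
      congr 1 <;> exact Fin.ext rfl
    have hQrank : Q.rank = r₁ + r₂ := by
      rw [← hQeq, hQ _ _ h1m hn1 le_rfl le_rfl,
        rank_ulSub_omega r₁ r₂ m₁ n₁ n₂ _ _ le_rfl le_rfl (by omega)]
      omega
    have hrange : finrank ℝ (span ℝ (Set.range colf)) = r₁ + r₂ := by
      rw [hcolf, ← rank_eq_span, hQrank]
    by_cases hkd : k.val < r₁ + n₁ + r₂
    · exact subset_span ⟨k, hkd, rfl⟩
    · by_cases hd0 : r₁ + n₁ + r₂ = 0
      · have hbot : span ℝ (Set.range colf) = ⊥ := by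
          have h0 : finrank ℝ (span ℝ (Set.range colf)) = 0 := by omega
          rwa [Submodule.finrank_eq_zero] at h0
        have : colf k ∈ (⊥ : Submodule ℝ (Fin (r₁ + r₂ + m₁) → ℝ)) := by
          rw [← hbot]
          exact subset_span ⟨k, rfl⟩
        rw [Submodule.mem_bot] at this
        show colf k ∈ _
        rw [this]
        exact zero_mem _
      · have h1d : 1 ≤ r₁ + n₁ + r₂ := by omega
        have hdn : r₁ + n₁ + r₂ ≤ r₁ + n₁ + r₂ + n₂ := by omega
        set vd : Fin (r₁ + n₁ + r₂) → (Fin (r₁ + r₂ + m₁) → ℝ) :=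
          fun l i => ulSub Q (r₁ + r₂ + m₁) (r₁ + n₁ + r₂) le_rfl hdn i l with hvd
        have himg : colf '' {k' | k'.val < r₁ + n₁ + r₂} = Set.range vd := by
          ext x
          constructor
          · rintro ⟨l, hl, rfl⟩
            refine ⟨⟨l.val, hl⟩, ?_⟩
            funext i
            show Q (Fin.castLE _ i) (Fin.castLE hdn ⟨l.val, hl⟩) = Q i l
            congr 1 <;> exact Fin.ext rfl
          · rintro ⟨l', rfl⟩
            refine ⟨⟨l'.val, by omega⟩, l'.isLt, ?_⟩
            funext i
            show Q i (⟨l'.val, _⟩ : Fin (r₁ + n₁ + r₂ + n₂))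
              = Q (Fin.castLE _ i) (Fin.castLE hdn l')
            congr 1 <;> exact Fin.ext rfl
        have himgrank : finrank ℝ (span ℝ (colf '' {k' | k'.val < r₁ + n₁ + r₂}))
            = r₁ + r₂ := by
          rw [himg, hvd, ← rank_eq_span,
            hQ _ _ h1m h1d le_rfl hdn,
            rank_ulSub_omega r₁ r₂ m₁ n₁ n₂ _ _ le_rfl hdn (by omega)]
          omega
        have hle : span ℝ (colf '' {k' | k'.val < r₁ + n₁ + r₂})
            ≤ span ℝ (Set.range colf) := span_mono (Set.image_subset_range _ _)
        have heq := Submodule.eq_of_le_of_finrank_le hle (by rw [hrange, himgrank])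
        show colf k ∈ _
        rw [heq]
        exact subset_span ⟨k, rfl⟩


end NormalColsAux

/-- Lemma 5.9: if `N` is normal to `X_ω` at `Q` (with respect to the
trace inner product), then its columns `N_j` for `j > r₁ + n₁` lie in `C(Q)ᗮ`;
consequently, the reflection `U_Q` through `C(Q)` sends those columns to `−N_j`
(so `Φ_Q` reverses the sign of the last `r₂ + n₂` columns of `N`). -/
theorem normal_columns_perp (r₁ r₂ m₁ n₁ n₂ : ℕ)
    (Q : Matrix (Fin (r₁ + r₂ + m₁)) (Fin (r₁ + n₁ + r₂ + n₂)) ℝ)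
    (hQ : memX (omegaBlk r₁ r₂ m₁ n₁ n₂) Q)
    (N : Matrix (Fin (r₁ + r₂ + m₁)) (Fin (r₁ + n₁ + r₂ + n₂)) ℝ)
    (hN : ∀ T ∈ tangentConeAt ℝ {B | memX (omegaBlk r₁ r₂ m₁ n₁ n₂) B} Q,
      Matrix.trace (Nᵀ * T) = 0)
    (U : Matrix (Fin (r₁ + r₂ + m₁)) (Fin (r₁ + r₂ + m₁)) ℝ)
    (hU1 : ∀ v : EuclideanSpace ℝ (Fin (r₁ + r₂ + m₁)), v ∈ colSpace Q →
      U.mulVec (fun i => v i) = fun i => v i)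
    (hU2 : ∀ v : EuclideanSpace ℝ (Fin (r₁ + r₂ + m₁)), v ∈ (colSpace Q)ᗮ →
      U.mulVec (fun i => v i) = fun i => -(v i)) :
    (∀ j : Fin (r₁ + n₁ + r₂ + n₂), r₁ + n₁ ≤ j.val →
      (show EuclideanSpace ℝ (Fin (r₁ + r₂ + m₁)) from WithLp.toLp 2 fun i => N i j) ∈
        (colSpace Q)ᗮ) ∧
    (∀ j : Fin (r₁ + n₁ + r₂ + n₂), r₁ + n₁ ≤ j.val →
      U.mulVec (fun i => N i j) = fun i => -(N i j)) := by
  classical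
  set colf : Fin (r₁ + n₁ + r₂ + n₂) → (Fin (r₁ + r₂ + m₁) → ℝ) :=
    fun l i => Q i l with hcolf
  have part1 : ∀ j : Fin (r₁ + n₁ + r₂ + n₂), r₁ + n₁ ≤ j.val →
      (show EuclideanSpace ℝ (Fin (r₁ + r₂ + m₁)) from WithLp.toLp 2 fun i => N i j) ∈
        (colSpace Q)ᗮ := by
    intro j hj
    have hn1 : 1 ≤ r₁ + n₁ + r₂ + n₂ := by have := j.isLt; omega
    have hbase : ∀ x ∈ span ℝ (colf '' {k' | k'.val < r₁ + n₁ + r₂}),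
        ∑ i, x i * N i j = 0 := by
      intro x hx
      induction hx using Submodule.span_induction with
      | mem x hmem =>
        obtain ⟨k, hk, rfl⟩ := hmem
        exact dot_zero r₁ r₂ m₁ n₁ n₂ Q N hQ hN j k hj (Or.inr hk)
      | zero => simp
      | add a b _ _ ha hb => simp [add_mul, Finset.sum_add_distrib, ha, hb]
      | smul r a _ ha =>
        simp only [Pi.smul_apply, smul_eq_mul, mul_assoc, ← Finset.mul_sum, ha, mul_zero]
    have hall : ∀ x ∈ span ℝ (Set.range colf), ∑ i, x i * N i j = 0 := by
      intro x hx
      refine hbase x ?_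
      refine (span_le.mpr ?_) hx
      rintro y ⟨k, rfl⟩
      exact col_closure r₁ r₂ m₁ n₁ n₂ Q hQ hn1 k
    refine (Submodule.mem_orthogonal _ _).mpr ?_
    intro u hu
    have hu' : (fun i => u i : Fin (r₁ + r₂ + m₁) → ℝ) ∈ span ℝ (Set.range colf) := by
      have := Submodule.mem_map_of_mem
        (f := (WithLp.linearEquiv 2 ℝ (Fin (r₁ + r₂ + m₁) → ℝ)).toLinearMap) hu
      rw [colSpace, Submodule.map_span, ← Set.range_comp] at this
      exact this
    have hz := hall _ hu'
    show (inner ℝ u _ : ℝ) = 0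
    rw [PiLp.inner_apply]
    simpa [RCLike.inner_apply, conj_trivial, mul_comm] using hz
  exact ⟨part1, fun j hj => hU2 _ (part1 j hj)⟩
end

section
/- Consider the partial permutation ω ∈ M_{3,3}(ℝ) with ω₁₂ = ω₃₁ = 1 and all other entries 0. The matrix Schubert variety X̄_ω = {A ∈ M_{3,3}(ℝ) : A₁₁ = A₂₁ = 0 and A₁₂A₂₃ − A₂₂A₁₃ = 0} is isometric (as a subset of ℝ⁹ ≅ M_{3,3}(ℝ)) to Cl₃ × ℝ³ ⊂ ℝ⁴ × ℝ³ ⊂ ℝ⁹, where Cl₃ = {(a,b,c,d) ∈ ℝ⁴ : ad − bc = 0} is the cone over the Clifford torus. -/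
/-- The partial permutation with `ω₁₂ = ω₃₁ = 1`. -/
def om19 : Matrix (Fin 3) (Fin 3) ℝ := !![0, 1, 0; 0, 0, 0; 1, 0, 0]

theorem rank_submatrix_le'' {l m n k : Type*} [Fintype l] [Fintype m] [Fintype n] [Fintype k]
    [DecidableEq m] [DecidableEq n] (A : Matrix m n ℝ) (f : l → m) (g : k → n) :
    (A.submatrix f g).rank ≤ A.rank := by
  have h : A.submatrix f g =
      (Matrix.of fun i j => if f i = j then (1:ℝ) else 0) * A *
        (Matrix.of fun j k => if g k = j then (1:ℝ) else 0) := by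
    ext i k
    simp [Matrix.mul_apply, ite_mul, mul_ite, Finset.mul_sum]
  rw [h]
  exact (Matrix.rank_mul_le_left _ _).trans (Matrix.rank_mul_le_right _ _)

theorem le_rank_of_det {m n : Type*} [Fintype m] [Fintype n] [DecidableEq m] [DecidableEq n]
    {k : ℕ} (A : Matrix m n ℝ) (f : Fin k → m) (g : Fin k → n)
    (h : (A.submatrix f g).det ≠ 0) : k ≤ A.rank := by
  have h2 := Matrix.rank_of_isUnit (A.submatrix f g)
    ((Matrix.isUnit_iff_isUnit_det _).2 h.isUnit)
  have := rank_submatrix_le'' A f g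
  simpa [h2] using this

theorem rank_le_of_eq_mul {m' n' r : ℕ} (M : Matrix (Fin m') (Fin n') ℝ)
    (B : Matrix (Fin m') (Fin r) ℝ) (C : Matrix (Fin r) (Fin n') ℝ)
    (h : M = B * C) : M.rank ≤ r := by
  rw [h]
  exact (Matrix.rank_mul_le_left _ _).trans (by simpa using Matrix.rank_le_card_width B)

theorem exists_outer {a b c d : ℝ} (h : a * d - b * c = 0) :
    ∃ u₀ u₁ v₁ v₂ : ℝ, a = u₀ * v₁ ∧ b = u₁ * v₁ ∧ c = u₀ * v₂ ∧ d = u₁ * v₂ := by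
  rcases eq_or_ne a 0 with ha | ha
  · rcases eq_or_ne b 0 with hb | hb
    · exact ⟨c, d, 0, 1, by simp [ha], by simp [hb], by ring, by ring⟩
    · have hc : c = 0 := by
        have : b * c = 0 := by rw [ha] at h; linarith
        rcases mul_eq_zero.1 this with h' | h'
        · exact absurd h' hb
        · exact h'
      exact ⟨0, 1, b, d, by simp [ha], by ring, by simp [hc], by ring⟩
  · refine ⟨a, b, 1, c / a, by ring, by ring, by field_simp, ?_⟩
    field_simp
    linarith

def e9 : Fin 3 × Fin 3 ≃ Fin 9 where
  toFun p := ![![7, 0, 2], ![8, 1, 3], ![4, 5, 6]] p.1 p.2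
  invFun i := ![((0:Fin 3), (1:Fin 3)), (1, 1), (0, 2), (1, 2), (2, 0), (2, 1), (2, 2), (0, 0), (1, 0)] i
  left_inv := by decide
  right_inv := by decide

noncomputable def f9 : EuclideanSpace ℝ (Fin 3 × Fin 3) ≃ₗᵢ[ℝ] EuclideanSpace ℝ (Fin 9) :=
  LinearIsometryEquiv.piLpCongrLeft 2 ℝ ℝ e9

theorem f9_apply (v : EuclideanSpace ℝ (Fin 3 × Fin 3)) (i : Fin 9) :
    f9 v i = v (e9.symm i) := rfl

theorem f9_symm_apply (x : EuclideanSpace ℝ (Fin 9)) (p : Fin 3 × Fin 3) :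
    f9.symm x p = x (e9 p) := by
  rw [f9, LinearIsometryEquiv.piLpCongrLeft_symm]; rfl

/-- the matrix Schubert variety `X̄_ω` for `ω` with `ω₁₂ = ω₃₁ = 1` is
`{A : A₁₁ = A₂₁ = 0, A₁₂A₂₃ − A₂₂A₁₃ = 0}`, and (as a subset of `ℝ⁹ ≅ M₃ₓ₃(ℝ)` with
the trace inner product) it is isometric to `Cl₃ × ℝ³ ⊆ ℝ⁴ × ℝ³ ⊆ ℝ⁹`, where `Cl₃` is
the cone over the Clifford torus, the set of `2×2` matrices of determinant `0`. -/
theorem schubert_congruent_clifford_cone :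
    ({A : Matrix (Fin 3) (Fin 3) ℝ |
        ∀ (p q : ℕ) (_ : 1 ≤ p) (_ : 1 ≤ q) (hp : p ≤ 3) (hq : q ≤ 3),
          (ulSub A p q hp hq).rank ≤ (ulSub om19 p q hp hq).rank} =
      {A : Matrix (Fin 3) (Fin 3) ℝ |
        A 0 0 = 0 ∧ A 1 0 = 0 ∧ A 0 1 * A 1 2 - A 1 1 * A 0 2 = 0}) ∧
    ∃ f : EuclideanSpace ℝ (Fin 3 × Fin 3) ≃ₗᵢ[ℝ] EuclideanSpace ℝ (Fin 9),
      f '' {v : EuclideanSpace ℝ (Fin 3 × Fin 3) |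
          v (0, 0) = 0 ∧ v (1, 0) = 0 ∧ v (0, 1) * v (1, 2) - v (1, 1) * v (0, 2) = 0} =
        {x : EuclideanSpace ℝ (Fin 9) |
          x 0 * x 3 - x 1 * x 2 = 0 ∧ x 7 = 0 ∧ x 8 = 0} := by
  constructor
  · ext A
    simp only [Set.mem_setOf_eq]
    constructor
    · intro hA
      -- om19 upper-left blocks that vanish
      have hw11 : ulSub om19 1 1 (by norm_num) (by norm_num) = 0 := by
        ext i j
        fin_cases i; fin_cases j
        simp [ulSub, om19]
      have hw21 : ulSub om19 2 1 (by norm_num) (by norm_num) = 0 := by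
        ext i j
        fin_cases i <;> fin_cases j <;>
          simp [ulSub, om19, show Fin.castLE (by norm_num : 2 ≤ 3) (1 : Fin 2) = (1 : Fin 3)
            from rfl]
      have hA21 := hA 2 1 (by norm_num) (by norm_num) (by norm_num) (by norm_num)
      rw [hw21, Matrix.rank_zero] at hA21
      have hA00 : A 0 0 = 0 := by
        by_contra h
        have : 1 ≤ (ulSub A 2 1 (by norm_num) (by norm_num)).rank := by
          apply le_rank_of_det _ ![0] ![0]
          rw [Matrix.det_fin_one]
          exact h
        omega
      have hA10 : A 1 0 = 0 := by
        by_contra h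
        have : 1 ≤ (ulSub A 2 1 (by norm_num) (by norm_num)).rank := by
          apply le_rank_of_det _ ![1] ![0]
          rw [Matrix.det_fin_one]
          exact h
        omega
      refine ⟨hA00, hA10, ?_⟩
      have hA23 := hA 2 3 (by norm_num) (by norm_num) (by norm_num) (by norm_num)
      have hw23 : (ulSub om19 2 3 (by norm_num) (by norm_num)).rank ≤ 1 := by
        apply rank_le_of_eq_mul _ !![(1:ℝ); 0] !![0, 1, 0]
        ext i j
        fin_cases i <;> fin_cases j <;>
          simp [ulSub, om19, Matrix.mul_apply, Fin.sum_univ_succ,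
            show Fin.castLE (by norm_num : 2 ≤ 3) (1 : Fin 2) = (1 : Fin 3) from rfl]
      by_contra h
      have : 2 ≤ (ulSub A 2 3 (by norm_num) (by norm_num)).rank := by
        apply le_rank_of_det _ id ![1, 2]
        rw [Matrix.det_fin_two]
        show A 0 1 * A 1 2 - A 0 2 * A 1 1 ≠ 0
        intro h'
        exact h (by linarith)
      omega
    · rintro ⟨h1, h2, h3⟩ p q hp1 hq1 hp hq
      obtain ⟨u₀, u₁, v₁, v₂, e1, e2, e3, e4⟩ := exists_outer h3
      interval_cases p <;> interval_cases q
      -- (1,1)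
      · have hz : ulSub A 1 1 hp hq = 0 := by
          ext i j; fin_cases i; fin_cases j
          simpa [ulSub] using h1
        rw [hz, Matrix.rank_zero]
        exact Nat.zero_le _
      -- (1,2)
      · refine le_trans ?_ (le_rank_of_det (ulSub om19 1 2 hp hq) ![0] ![1] ?_)
        · exact Matrix.rank_le_height _
        · rw [Matrix.det_fin_one]
          show om19 0 1 ≠ 0
          norm_num [om19]
      -- (1,3)
      · refine le_trans ?_ (le_rank_of_det (ulSub om19 1 3 hp hq) ![0] ![1] ?_)
        · exact Matrix.rank_le_height _
        · rw [Matrix.det_fin_one]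
          show om19 0 1 ≠ 0
          norm_num [om19]
      -- (2,1)
      · have hz : ulSub A 2 1 hp hq = 0 := by
          ext i j
          fin_cases i <;> fin_cases j <;>
            simp [ulSub, h1, h2,
              show Fin.castLE hp (1 : Fin 2) = (1 : Fin 3) from rfl]
        rw [hz, Matrix.rank_zero]
        exact Nat.zero_le _
      -- (2,2)
      · refine le_trans (rank_le_of_eq_mul _ !![A 0 1; A 1 1] !![0, 1] ?_)
          (le_rank_of_det (ulSub om19 2 2 hp hq) ![0] ![1] ?_)
        · ext i j
          fin_cases i <;> fin_cases j <;>
            simp [ulSub, Matrix.mul_apply, Fin.sum_univ_succ, h1, h2,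
              show Fin.castLE hp (1 : Fin 2) = (1 : Fin 3) from rfl]
        · rw [Matrix.det_fin_one]
          show om19 0 1 ≠ 0
          norm_num [om19]
      -- (2,3)
      · refine le_trans (rank_le_of_eq_mul _ !![u₀; u₁] !![0, v₁, v₂] ?_)
          (le_rank_of_det (ulSub om19 2 3 hp hq) ![0] ![1] ?_)
        · ext i j
          fin_cases i <;> fin_cases j <;>
            simp [ulSub, Matrix.mul_apply, Fin.sum_univ_succ, h1, h2, e1, e2, e3, e4,
              show Fin.castLE hp (1 : Fin 2) = (1 : Fin 3) from rfl]
        · rw [Matrix.det_fin_one]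
          show om19 0 1 ≠ 0
          norm_num [om19]
      -- (3,1)
      · refine le_trans (Matrix.rank_le_width _) (le_rank_of_det (ulSub om19 3 1 hp hq) ![2] ![0] ?_)
        rw [Matrix.det_fin_one]
        show om19 2 0 ≠ 0
        norm_num [om19]
        exact one_ne_zero
      -- (3,2)
      · refine le_trans (Matrix.rank_le_width _)
          (le_rank_of_det (ulSub om19 3 2 hp hq) ![0, 2] ![0, 1] ?_)
        rw [Matrix.det_fin_two]
        show om19 0 0 * om19 2 1 - om19 0 1 * om19 2 0 ≠ 0
        norm_num [om19]
        exact one_ne_zero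
      -- (3,3)
      · refine le_trans (rank_le_of_eq_mul _ !![u₀, 0; u₁, 0; 0, 1]
          !![0, v₁, v₂; A 2 0, A 2 1, A 2 2] ?_)
          (le_rank_of_det (ulSub om19 3 3 hp hq) ![0, 2] ![0, 1] ?_)
        · ext i j
          fin_cases i <;> fin_cases j <;>
            simp [ulSub, Matrix.mul_apply, Fin.sum_univ_succ, h1, h2, e1, e2, e3, e4,
              show Fin.castLE hp (1 : Fin 3) = (1 : Fin 3) from rfl,
              show Fin.castLE hp (2 : Fin 3) = (2 : Fin 3) from rfl]
        · rw [Matrix.det_fin_two]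
          show om19 0 0 * om19 2 1 - om19 0 1 * om19 2 0 ≠ 0
          norm_num [om19]
          exact one_ne_zero
  · refine ⟨f9, ?_⟩
    ext x
    rw [Set.mem_image]
    constructor
    · rintro ⟨v, ⟨h1, h2, h3⟩, rfl⟩
      refine ⟨?_, ?_, ?_⟩
      · rw [f9_apply, f9_apply, f9_apply, f9_apply,
          show e9.symm 0 = (0,1) from rfl, show e9.symm 3 = (1,2) from rfl,
          show e9.symm 1 = (1,1) from rfl, show e9.symm 2 = (0,2) from rfl]
        exact h3
      · rw [f9_apply, show e9.symm 7 = (0,0) from rfl]; exact h1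
      · rw [f9_apply, show e9.symm 8 = (1,0) from rfl]; exact h2
    · rintro ⟨h1, h2, h3⟩
      refine ⟨f9.symm x, ⟨?_, ?_, ?_⟩, f9.apply_symm_apply x⟩
      · rw [f9_symm_apply, show e9 (0,0) = 7 from rfl]; exact h2
      · rw [f9_symm_apply, show e9 (1,0) = 8 from rfl]; exact h3
      · rw [f9_symm_apply, f9_symm_apply, f9_symm_apply, f9_symm_apply,
          show e9 (0,1) = 0 from rfl, show e9 (1,2) = 3 from rfl,
          show e9 (1,1) = 1 from rfl, show e9 (0,2) = 2 from rfl]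
        exact h1
end
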